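/- Let T be a right R-module with S = End(T_R), and let Y be a right R-module. If X is a right R-module admitting an exact sequence 0 → X → T_0 → T_1 with T_0, T_1 finite direct sums of direct summands of copies of T, such that Ext^1_R(coker(X → T_0), T) = 0 and Ext^1_R(coker(T_0 → T_1), T) = 0, then the natural map φ_X : Hom_R(Y, X) → Hom_S(Hom_R(X,T), Hom_R(Y,T)), given by φ_X(f)(g) = g ∘ f, is an isomorphism of abelian groups. -/

import Mathlib

noncomputable section
open CategoryTheory

universe u

/-- Vanishing of `Ext^i_A(M, N)` for `A`-modules `M`, `N`. -/
def extVanish (A : Type u) [Ring A] (i : ℕ) (M N : Type u) [AddCommGroup M] [Module A M]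
    [AddCommGroup N] [Module A N] : Prop :=
  Subsingleton
    (((Ext ℤ (ModuleCat.{u} A) i).obj (Opposite.op (ModuleCat.of A M))).obj (ModuleCat.of A N))

/-- `M` is a direct summand of a finite direct sum of copies of `T`, i.e. `M ∈ add T`. -/
def InAdd (A : Type u) [Ring A] (T : Type u) [AddCommGroup T] [Module A T]
    (M : Type u) [AddCommGroup M] [Module A M] : Prop :=
  ∃ (n : ℕ) (ι : M →ₗ[A] (Fin n → T)) (π : (Fin n → T) →ₗ[A] M), π ∘ₗ ι = LinearMap.id

/-- The natural map `φ_X : Hom_A(Y, X) → Hom_S(Hom_A(X,T), Hom_A(Y,T))`, `f ↦ (g ↦ g ∘ f)`,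
where `S = End(T)` acts on Hom-groups into `T` by postcomposition. -/
def homDual (A : Type u) [Ring A] (T : Type u) [AddCommGroup T] [Module A T]
    {X Y : Type u} [AddCommGroup X] [Module A X] [AddCommGroup Y] [Module A Y]
    (f : Y →ₗ[A] X) : (X →ₗ[A] T) →ₗ[Module.End A T] (Y →ₗ[A] T) where
  toFun g := g ∘ₗ f
  map_add' g h := by ext y; rfl
  map_smul' s g := by ext y; rfl

/-- Maps into `T` separate points of any module in `add T`. -/
lemma inAdd_sep {A T M : Type u} [Ring A] [AddCommGroup T] [Module A T]
    [AddCommGroup M] [Module A M] (h : InAdd A T M) {m : M}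
    (hm : ∀ φ : M →ₗ[A] T, φ m = 0) : m = 0 := by
  obtain ⟨n, ι, π, hπι⟩ := h
  have hι : ι m = 0 := by
    ext i
    show ((LinearMap.proj i) ∘ₗ ι) m = 0
    rw [hm ((LinearMap.proj i) ∘ₗ ι)]
  have : π (ι m) = m := by
    have := congrArg (fun (φ : M →ₗ[A] M) => φ m) hπι
    simpa using this
  rw [← this, hι, map_zero]

/-- Surjectivity of `φ_M` for `M ∈ add T`. -/
lemma homDual_surj_of_inAdd {A T Y M : Type u} [Ring A] [AddCommGroup T] [Module A T]
    [AddCommGroup Y] [Module A Y] [AddCommGroup M] [Module A M] (h : InAdd A T M)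
    (Φ : (M →ₗ[A] T) →ₗ[Module.End A T] (Y →ₗ[A] T)) :
    ∃ u : Y →ₗ[A] M, ∀ g : M →ₗ[A] T, Φ g = g ∘ₗ u := by
  obtain ⟨n, ι, π, hπι⟩ := h
  set w : Y →ₗ[A] (Fin n → T) :=
    LinearMap.pi (fun i => Φ ((LinearMap.proj i) ∘ₗ ι)) with hw
  refine ⟨π ∘ₗ w, fun g => ?_⟩
  set s : Fin n → Module.End A T :=
    fun i => (g ∘ₗ π) ∘ₗ LinearMap.single A (fun _ : Fin n => T) i with hs
  have hdecomp : g = ∑ i, s i • ((LinearMap.proj i) ∘ₗ ι) := by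
    refine LinearMap.ext (fun m => ?_)
    have h1 : g m = g (π (ι m)) := by
      have := congrArg (fun (φ : M →ₗ[A] M) => φ m) hπι
      simp only [LinearMap.comp_apply, LinearMap.id_apply] at this
      rw [this]
    rw [h1]
    have h2 : (ι m : Fin n → T) = ∑ i, Pi.single i (ι m i) :=
      (Finset.univ_sum_single (ι m)).symm
    rw [LinearMap.sum_apply]
    conv_lhs => rw [h2, map_sum, map_sum]
    refine Finset.sum_congr rfl (fun i _ => ?_)
    rfl
  conv_lhs => rw [hdecomp, map_sum]
  refine LinearMap.ext (fun yy => ?_)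
  rw [LinearMap.sum_apply]
  have hR : (g ∘ₗ (π ∘ₗ w)) yy = ∑ i, s i (w yy i) := by
    show g (π (w yy)) = _
    conv_lhs => rw [← Finset.univ_sum_single (w yy)]
    rw [map_sum, map_sum]
    rfl
  show _ = (g ∘ₗ (π ∘ₗ w)) yy
  rw [hR]
  refine Finset.sum_congr rfl (fun i _ => ?_)
  rw [map_smul]
  rfl

lemma extVanish_extend {A : Type u} [Ring A] {T X T₀ : Type u}
    [AddCommGroup T] [Module A T] [AddCommGroup X] [Module A X] [AddCommGroup T₀] [Module A T₀]
    (f : X →ₗ[A] T₀) (hf : Function.Injective f)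
    (h₁ : extVanish A 1 (T₀ ⧸ LinearMap.range f) T) (w : X →ₗ[A] T) :
    ∃ g₀ : T₀ →ₗ[A] T, g₀ ∘ₗ f = w := by
  classical
  obtain ⟨P⟩ := (inferInstance :
    HasProjectiveResolution (ModuleCat.of A (T₀ ⧸ LinearMap.range f))).out
  have hcongr : ∀ {M N : ModuleCat.{u} A} {u v : M ⟶ N}, u = v → ∀ m : M, u m = v m :=
    fun h m => by rw [h]
  have hsub : Subsingleton
      ((P.complex.linearYonedaObj ℤ (ModuleCat.of A T)).homology 1) := by
    have e := ((forget (ModuleCat ℤ)).mapIso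
      (P.isoExt (R := ℤ) 1 (ModuleCat.of A T))).toEquiv
    rw [extVanish] at h₁
    exact e.symm.subsingleton
  have hzero : Limits.IsZero ((P.complex.linearYonedaObj ℤ (ModuleCat.of A T)).homology 1) :=
    ModuleCat.isZero_of_subsingleton _
  have hex : (P.complex.linearYonedaObj ℤ (ModuleCat.of A T)).ExactAt 1 :=
    ((P.complex.linearYonedaObj ℤ (ModuleCat.of A T)).exactAt_iff_isZero_homology 1).2 hzero
  rw [(P.complex.linearYonedaObj ℤ (ModuleCat.of A T)).exactAt_iff' 0 1 2
    (by simp) (by simp)] at hex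
  rw [ShortComplex.moduleCat_exact_iff] at hex
  have hπ₀surj : Function.Surjective (P.π.f 0) := by
    rw [← ModuleCat.epi_iff_surjective]; infer_instance
  haveI : Epi (ModuleCat.ofHom (LinearMap.range f).mkQ) :=
    (ModuleCat.epi_iff_surjective _).2 (Submodule.mkQ_surjective _)
  set α : P.complex.X 0 ⟶ ModuleCat.of A T₀ :=
    @Projective.factorThru _ _ _ _ _ _ (P.π.f 0) (ModuleCat.ofHom (LinearMap.range f).mkQ :
      ModuleCat.of A T₀ ⟶ ModuleCat.of A (T₀ ⧸ LinearMap.range f)) this with hα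
  set α' : P.complex.X 0 →ₗ[A] T₀ := α.hom with hα'
  have hαp : ∀ q, (LinearMap.range f).mkQ (α' q) = P.π.f 0 q := fun q =>
    hcongr (@Projective.factorThru_comp _ _ _ _ _ _ (P.π.f 0) (ModuleCat.ofHom (LinearMap.range f).mkQ :
      ModuleCat.of A T₀ ⟶ ModuleCat.of A (T₀ ⧸ LinearMap.range f)) this) q
  have hd10 : ∀ q : P.complex.X 1, α' (P.complex.d 1 0 q) ∈ LinearMap.range f := by
    intro q
    have h0 : P.π.f 0 (P.complex.d 1 0 q) = 0 := hcongr P.complex_d_comp_π_f_zero q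
    have h2 : α' (P.complex.d 1 0 q) ∈ LinearMap.ker (LinearMap.range f).mkQ :=
      LinearMap.mem_ker.2 ((hαp _).trans h0)
    rwa [Submodule.ker_mkQ] at h2
  set β : P.complex.X 1 →ₗ[A] X :=
    (LinearEquiv.ofInjective f hf).symm.toLinearMap ∘ₗ
      LinearMap.codRestrict (LinearMap.range f)
        (α' ∘ₗ (P.complex.d 1 0).hom) hd10 with hβ
  have hfβ : ∀ q, f (β q) = α' (P.complex.d 1 0 q) := by
    intro q
    have h3 : β q = (LinearEquiv.ofInjective f hf).symm
        ⟨α' (P.complex.d 1 0 q), hd10 q⟩ := rfl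
    rw [h3, ← LinearEquiv.ofInjective_apply f (h := hf), LinearEquiv.apply_symm_apply]
  set x : P.complex.X 1 ⟶ ModuleCat.of A T := ModuleCat.ofHom (w ∘ₗ β) with hx
  have hxcocycle : (P.complex.linearYonedaObj ℤ (ModuleCat.of A T)).d 1 2 x = 0 := by
    have hcomp : (P.complex.linearYonedaObj ℤ (ModuleCat.of A T)).d 1 2 x
        = P.complex.d 2 1 ≫ x := by simp [ChainComplex.linearYonedaObj]; rfl
    rw [hcomp]
    refine ModuleCat.hom_ext (LinearMap.ext (fun q => ?_))
    have h4 : P.complex.d 1 0 (P.complex.d 2 1 q) = 0 := hcongr (P.complex.d_comp_d 2 1 0) q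
    have hβ0 : β (P.complex.d 2 1 q) = 0 := by
      apply hf
      rw [hfβ, h4, map_zero, map_zero]
    show w (β (P.complex.d 2 1 q)) = 0
    rw [hβ0, map_zero]
  obtain ⟨y₀, hy₀⟩ := hex x hxcocycle
  set y : P.complex.X 0 ⟶ ModuleCat.of A T := y₀ with hy
  set y' : P.complex.X 0 →ₗ[A] T := y.hom with hy'def
  have hy' : ∀ q, y' (P.complex.d 1 0 q) = w (β q) := by
    intro q
    have hcomp : (P.complex.linearYonedaObj ℤ (ModuleCat.of A T)).d 0 1 y
        = P.complex.d 1 0 ≫ y := by simp [ChainComplex.linearYonedaObj]; rfl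
    have hy2 : (P.complex.linearYonedaObj ℤ (ModuleCat.of A T)).d 0 1 y = x := hy₀
    rw [hcomp] at hy2
    exact hcongr hy2 q
  set θ : (P.complex.X 0 × X) →ₗ[A] T₀ := LinearMap.coprod α' f with hθ
  set ψ : (P.complex.X 0 × X) →ₗ[A] T := LinearMap.coprod y' w with hψ
  have hθsurj : Function.Surjective θ := by
    intro t
    obtain ⟨q, hq⟩ := hπ₀surj ((LinearMap.range f).mkQ t)
    have h5 : (LinearMap.range f).mkQ (t - α' q) = 0 := by
      rw [map_sub, hαp, hq, sub_self]
    have h6 : t - α' q ∈ LinearMap.range f := by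
      have := LinearMap.mem_ker.2 h5
      rwa [Submodule.ker_mkQ] at this
    obtain ⟨xx, hxx⟩ := h6
    refine ⟨(q, xx), ?_⟩
    show α' q + f xx = t
    rw [hxx]
    abel
  have hker : ∀ z, θ z = 0 → ψ z = 0 := by
    rintro ⟨q, xx⟩ hz
    have hz' : α' q + f xx = 0 := hz
    have hpf : (LinearMap.range f).mkQ (f xx) = 0 := by
      rw [← LinearMap.mem_ker, Submodule.ker_mkQ]
      exact LinearMap.mem_range_self f xx
    have h1 : (LinearMap.range f).mkQ (α' q) = 0 := by
      have h7 := congrArg (LinearMap.range f).mkQ hz'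
      rw [map_add, map_zero, hpf, add_zero] at h7
      exact h7
    have hπq : P.π.f 0 q = 0 := by rw [← hαp q]; exact h1
    obtain ⟨r, hr⟩ := (ShortComplex.moduleCat_exact_iff _).1 P.exact₀ q hπq
    have hr' : P.complex.d 1 0 r = q := hr
    have hxxe : xx = -β r := by
      apply hf
      rw [map_neg, hfβ, hr']
      rw [eq_neg_iff_add_eq_zero, add_comm]
      exact hz'
    show y' q + w xx = 0
    rw [hxxe, ← hr', hy', map_neg, add_neg_cancel]
  set L : ((P.complex.X 0 × X) ⧸ LinearMap.ker θ) →ₗ[A] T :=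
    Submodule.liftQ (LinearMap.ker θ) ψ (fun z hz => hker z (LinearMap.mem_ker.1 hz)) with hL
  refine ⟨L.comp (LinearMap.quotKerEquivOfSurjective θ hθsurj).symm.toLinearMap, ?_⟩
  have key : ∀ z, (L.comp
      (LinearMap.quotKerEquivOfSurjective θ hθsurj).symm.toLinearMap) (θ z) = ψ z := by
    intro z
    have he : (LinearMap.quotKerEquivOfSurjective θ hθsurj).symm (θ z)
        = Submodule.Quotient.mk z := by
      rw [LinearEquiv.symm_apply_eq]
      rfl
    show L ((LinearMap.quotKerEquivOfSurjective θ hθsurj).symm (θ z)) = ψ z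
    rw [he]
    exact Submodule.liftQ_apply _ _ _
  refine LinearMap.ext (fun xx => ?_)
  have hk := key (0, xx)
  have hθ0 : θ (0, xx) = f xx := by
    show α' 0 + f xx = f xx
    rw [map_zero, zero_add]
  have hψ0 : ψ (0, xx) = w xx := by
    show y' 0 + w xx = w xx
    rw [map_zero, zero_add]
  rw [hθ0, hψ0] at hk
  exact hk

/-- Let `T` be a right `R`-module, `S = End(T_R)`, `Y` a right `R`-module.  If
`X` admits an exact sequence `0 → X → T₀ → T₁` with `T₀, T₁ ∈ add T`,
`Ext¹(coker(X → T₀), T) = 0` and `Ext¹(coker(T₀ → T₁), T) = 0`, then the natural map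
`φ_X : Hom_R(Y, X) → Hom_S(Hom_R(X,T), Hom_R(Y,T))` is an isomorphism of abelian groups. -/
theorem homDual_bijective (R : Type u) [Ring R] (T : Type u) [AddCommGroup T]
    [Module Rᵐᵒᵖ T] (Y : Type u) [AddCommGroup Y] [Module Rᵐᵒᵖ Y]
    (X : Type u) [AddCommGroup X] [Module Rᵐᵒᵖ X]
    (T₀ T₁ : Type u) [AddCommGroup T₀] [Module Rᵐᵒᵖ T₀] [AddCommGroup T₁] [Module Rᵐᵒᵖ T₁]
    (hT₀ : InAdd Rᵐᵒᵖ T T₀) (hT₁ : InAdd Rᵐᵒᵖ T T₁)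
    (f : X →ₗ[Rᵐᵒᵖ] T₀) (g : T₀ →ₗ[Rᵐᵒᵖ] T₁)
    (hf : Function.Injective f) (hfg : Function.Exact f g)
    (h₁ : extVanish Rᵐᵒᵖ 1 (T₀ ⧸ LinearMap.range f) T)
    (h₂ : extVanish Rᵐᵒᵖ 1 (T₁ ⧸ LinearMap.range g) T) :
    Function.Bijective (fun f' : Y →ₗ[Rᵐᵒᵖ] X => homDual Rᵐᵒᵖ T f') := by
  constructor
  · intro v₁ v₂ hv
    have hv' : ∀ wm : X →ₗ[Rᵐᵒᵖ] T, wm ∘ₗ v₁ = wm ∘ₗ v₂ := by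
      intro wm
      exact congrArg (fun Φ => Φ wm) hv
    refine LinearMap.ext (fun yy => ?_)
    apply hf
    have hz : f (v₁ yy) - f (v₂ yy) = 0 := by
      apply inAdd_sep hT₀
      intro φ
      have := congrArg (fun (ψ : Y →ₗ[Rᵐᵒᵖ] T) => ψ yy) (hv' (φ ∘ₗ f))
      simp only [LinearMap.comp_apply] at this
      rw [map_sub, this, sub_self]
    exact sub_eq_zero.1 hz
  · intro Φ
    obtain ⟨u, hu⟩ := homDual_surj_of_inAdd hT₀ (Φ.comp (homDual Rᵐᵒᵖ T f))
    have hu' : ∀ g₀ : T₀ →ₗ[Rᵐᵒᵖ] T, Φ (g₀ ∘ₗ f) = g₀ ∘ₗ u := fun g₀ => hu g₀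
    have hgu : ∀ yy, g (u yy) = 0 := by
      intro yy
      apply inAdd_sep hT₁
      intro φ
      have h0 : (φ ∘ₗ g) ∘ₗ f = (0 : X →ₗ[Rᵐᵒᵖ] T) := by
        refine LinearMap.ext (fun xx => ?_)
        simp [hfg.apply_apply_eq_zero xx]
      have h3 := hu' (φ ∘ₗ g)
      rw [h0, map_zero] at h3
      have := congrArg (fun (ψ : Y →ₗ[Rᵐᵒᵖ] T) => ψ yy) h3
      simpa using this.symm
    have hmem : ∀ yy, u yy ∈ LinearMap.range f := by
      intro yy
      exact LinearMap.mem_range.2 ((hfg (u yy)).1 (hgu yy))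
    set v : Y →ₗ[Rᵐᵒᵖ] X := (LinearEquiv.ofInjective f hf).symm.toLinearMap ∘ₗ
      LinearMap.codRestrict (LinearMap.range f) u hmem with hvdef
    have hfv : ∀ yy, f (v yy) = u yy := by
      intro yy
      have h3 : v yy = (LinearEquiv.ofInjective f hf).symm ⟨u yy, hmem yy⟩ := rfl
      rw [h3, ← LinearEquiv.ofInjective_apply f (h := hf), LinearEquiv.apply_symm_apply]
    refine ⟨v, ?_⟩
    refine LinearMap.ext (fun wm => ?_)
    obtain ⟨g₀, hg₀⟩ := extVanish_extend f hf h₁ wm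
    show wm ∘ₗ v = Φ wm
    rw [← hg₀, LinearMap.comp_assoc, hu' g₀]
    refine LinearMap.ext (fun yy => ?_)
    show g₀ (f (v yy)) = g₀ (u yy)
    rw [hfv]

end
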